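/- Let (G,X) be a G-system, x ∈ X, and F = (F_n)_{n∈D} a Følner net in G. If C_F(x) is S-generic (there existsز z ∈ C_F(x) with C_F(z) = C_F(x)) and C_F(x) is not a minimal subset of (G,X), then the subsystem (G, C_F(x)) is point transitive (some point of C_F(x) has orbit dense in C_F(x)), and there exists ε > 0 such that for every z ∈ C_F(x) the set U_ε(z) = {y ∈ C_F(x) : there is a sequence (g_n) in G with liminf_n d(g_n z, g_n y) ≥ ε} is dense in C_F(x). -/

import Mathlib

open Filter Metric Set

section Defs

variable {G : Type*} [Group G] [DecidableEq G]
variable {D : Type*} [Preorder D]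

/-- `F` is a (left) Følner net in `G`. -/
def IsFolnerNet (F : D → Finset G) : Prop :=
  (∀ n, (F n).Nonempty) ∧
    ∀ g : G,
      Tendsto (fun n : D =>
          ((symmDiff ((F n).image fun h => g * h) (F n)).card : ℝ) / (F n).card)
        atTop (nhds 0)

/-- Upper density of `A ⊆ G` relative to the net `F`. -/
noncomputable def upperDensity (F : D → Finset G) (A : Set G) : ℝ :=
  sSup {α : ℝ | ∀ m : D, ∃ n : D, m ≤ n ∧
    α ≤ (((F n : Set G) ∩ A).ncard : ℝ) / (F n).card}

variable {X : Type*} [MetricSpace X] [MulAction G X]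

/-- The minimal `F`-center of attraction of `x`. -/
def minCenter (F : D → Finset G) (x : X) : Set X :=
  {y : X | ∀ U : Set X, IsOpen U → y ∈ U → 0 < upperDensity F {g : G | g • x ∈ U}}

end Defs

/-- `Λ` is a minimal subset of the `G`-system: nonempty, closed, `G`-invariant, and containing
no nonempty proper closed `G`-invariant subset. -/
def IsMinimalSubset (G : Type*) [Group G] {X : Type*} [MetricSpace X] [MulAction G X]
    (Λ : Set X) : Prop :=
  Λ.Nonempty ∧ IsClosed Λ ∧ (∀ g : G, ∀ z ∈ Λ, g • z ∈ Λ) ∧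
    ∀ Λ' ⊆ Λ, Λ'.Nonempty → IsClosed Λ' → (∀ g : G, ∀ z ∈ Λ', g • z ∈ Λ') → Λ' = Λ

set_option linter.unusedSectionVars false
set_option maxHeartbeats 1600000

namespace AYaux
variable {G : Type*} [Group G] [DecidableEq G]
variable {D : Type*} [Preorder D] [IsDirected D (· ≤ ·)] [Nonempty D]

def densSet (F : D → Finset G) (A : Set G) : Set ℝ :=
  {α : ℝ | ∀ m : D, ∃ n : D, m ≤ n ∧
    α ≤ (((F n : Set G) ∩ A).ncard : ℝ) / (F n).card}

lemma upperDensity_eq (F : D → Finset G) (A : Set G) :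
    upperDensity F A = sSup (densSet F A) := rfl

variable {F : D → Finset G} {A : Set G}

lemma card_pos_real (hne : ∀ n, (F n).Nonempty) (n : D) : (0 : ℝ) < (F n).card := by
  exact_mod_cast Finset.card_pos.mpr (hne n)

lemma zero_mem_densSet : (0 : ℝ) ∈ densSet F A := by
  intro m
  exact ⟨m, le_refl m, by positivity⟩

lemma bddAbove_densSet (hne : ∀ n, (F n).Nonempty) : BddAbove (densSet F A) := by
  refine ⟨1, fun β hβ => ?_⟩
  obtain ⟨n, -, h⟩ := hβ (Classical.arbitrary D)
  refine h.trans ?_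
  rw [div_le_one (card_pos_real hne n)]
  have : ((F n : Set G) ∩ A).ncard ≤ (F n).card := by
    rw [← Set.ncard_coe_finset (F n)]
    exact Set.ncard_le_ncard inter_subset_left (F n).finite_toSet
  exact_mod_cast this

lemma le_upperDensity (hne : ∀ n, (F n).Nonempty) {β : ℝ} (hβ : β ∈ densSet F A) :
    β ≤ upperDensity F A :=
  le_csSup (bddAbove_densSet hne) hβ

lemma exists_pos_mem (h : 0 < upperDensity F A) :
    ∃ α : ℝ, 0 < α ∧ α ∈ densSet F A := by
  obtain ⟨a, ha, hpos⟩ := exists_lt_of_lt_csSup (⟨0, zero_mem_densSet⟩ : (densSet F A).Nonempty) h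
  exact ⟨a, hpos, ha⟩

lemma nonempty_of_upperDensity_pos (hne : ∀ n, (F n).Nonempty)
    (h : 0 < upperDensity F A) : A.Nonempty := by
  obtain ⟨α, hαpos, hα⟩ := exists_pos_mem h
  obtain ⟨n, -, hr⟩ := hα (Classical.arbitrary D)
  have hc := card_pos_real hne n
  have hpos : (0 : ℝ) < (((F n : Set G) ∩ A).ncard : ℝ) := by
    have := (le_div_iff₀ hc).mp hr
    nlinarith
  have : ((F n : Set G) ∩ A).Nonempty := by
    apply Set.nonempty_of_ncard_ne_zero
    intro h0
    rw [h0] at hpos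
    norm_num at hpos
  obtain ⟨a, -, ha⟩ := this
  exact ⟨a, ha⟩

lemma exists_good_index (hFol : IsFolnerNet F) (hne : ∀ n, (F n).Nonempty) {α : ℝ}
    (hα : α ∈ densSet F A) (T : Finset G) {δ : ℝ} (hδ : 0 < δ) (m : D) :
    ∃ n, m ≤ n ∧ α ≤ (((F n : Set G) ∩ A).ncard : ℝ) / (F n).card ∧
      ∀ k ∈ T, ((symmDiff ((F n).image fun h => k * h) (F n)).card : ℝ) ≤ δ * (F n).card := by
  have hev : ∀ᶠ n in (atTop : Filter D), ∀ k ∈ T,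
      ((symmDiff ((F n).image fun h => k * h) (F n)).card : ℝ) ≤ δ * (F n).card := by
    rw [Filter.eventually_all_finset]
    intro k _
    filter_upwards [(hFol.2 k).eventually_lt_const hδ] with n hn
    have hc := card_pos_real hne n
    have := (div_lt_iff₀ hc).mp hn
    linarith
  obtain ⟨m0, -, hm0⟩ := (Filter.atTop_basis.eventually_iff).1 hev
  obtain ⟨m1, hm1, hm1'⟩ := exists_ge_ge m m0
  obtain ⟨n, hn, hr⟩ := hα m1
  exact ⟨n, hm1.trans hn, hr, hm0 (hm1'.trans hn)⟩

lemma ncard_inter_smul_ge (n : D) (k : G) (A : Set G) :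
    (((F n : Set G) ∩ A).ncard : ℝ)
      - ((symmDiff ((F n).image fun h => k⁻¹ * h) (F n)).card : ℝ)
      ≤ (((F n : Set G) ∩ (fun a => k * a) '' A).ncard : ℝ) := by
  have hinj : Function.Injective (fun a : G => k⁻¹ * a) := fun a b h => by
    simpa using mul_left_cancel h
  have himg : (fun a : G => k⁻¹ * a) '' ((F n : Set G) ∩ (fun a => k * a) '' A)
      = ((fun a : G => k⁻¹ * a) '' (F n : Set G)) ∩ A := by
    rw [Set.image_inter hinj]
    congr 1
    ext a
    simp only [Set.mem_image]
    constructor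
    · rintro ⟨b, ⟨c, hc, rfl⟩, rfl⟩
      simpa using hc
    · intro ha
      exact ⟨k * a, ⟨a, ha, rfl⟩, by group⟩
  have h1 : ((F n : Set G) ∩ (fun a => k * a) '' A).ncard
      = (((fun a : G => k⁻¹ * a) '' (F n : Set G)) ∩ A).ncard := by
    rw [← himg, Set.ncard_image_of_injective _ hinj]
  have hcoe : (fun a : G => k⁻¹ * a) '' (F n : Set G)
      = (((F n).image fun h => k⁻¹ * h : Finset G) : Set G) := by
    rw [Finset.coe_image]
  have hsub : (F n : Set G) ∩ A
      ⊆ (((fun a : G => k⁻¹ * a) '' (F n : Set G)) ∩ A)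
        ∪ ((symmDiff ((F n).image fun h => k⁻¹ * h) (F n) : Finset G) : Set G) := by
    intro a ha
    obtain ⟨haF, haA⟩ := ha
    by_cases hmem : a ∈ (fun a : G => k⁻¹ * a) '' (F n : Set G)
    · exact Or.inl ⟨hmem, haA⟩
    · refine Or.inr ?_
      rw [Finset.mem_coe, Finset.mem_symmDiff]
      refine Or.inr ⟨haF, ?_⟩
      rw [hcoe] at hmem
      exact fun hc => hmem hc
  have hkey : ((F n : Set G) ∩ A).ncard
      ≤ ((F n : Set G) ∩ (fun a => k * a) '' A).ncard
        + (symmDiff ((F n).image fun h => k⁻¹ * h) (F n)).card := by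
    calc ((F n : Set G) ∩ A).ncard
        ≤ ((((fun a : G => k⁻¹ * a) '' (F n : Set G)) ∩ A)
            ∪ ((symmDiff ((F n).image fun h => k⁻¹ * h) (F n) : Finset G) : Set G)).ncard := by
          apply Set.ncard_le_ncard hsub
            ((((F n).finite_toSet.image _)).inter_of_left A |>.union (symmDiff _ _:Finset G).finite_toSet)
      _ ≤ (((fun a : G => k⁻¹ * a) '' (F n : Set G)) ∩ A).ncard
            + ((symmDiff ((F n).image fun h => k⁻¹ * h) (F n) : Finset G) : Set G).ncard :=
          Set.ncard_union_le _ _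
      _ = ((F n : Set G) ∩ (fun a => k * a) '' A).ncard
            + (symmDiff ((F n).image fun h => k⁻¹ * h) (F n)).card := by
          rw [h1, Set.ncard_coe_finset]
  have := Nat.cast_le (α := ℝ) |>.mpr hkey
  push_cast at this
  linarith

/-- If `A` has positive upper density and `g • A ⊆ B`, then `B` has positive upper density. -/
lemma upperDensity_pos_of_smul (hFol : IsFolnerNet F) {A B : Set G} (g : G)
    (hAB : (fun a => g * a) '' A ⊆ B)
    (h : 0 < upperDensity F A) : 0 < upperDensity F B := by
  have hne := hFol.1
  obtain ⟨α, hαpos, hα⟩ := exists_pos_mem h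
  have hmem : α / 2 ∈ densSet F B := by
    intro m
    obtain ⟨n, hmn, hr, hsym⟩ := exists_good_index hFol hne hα {g⁻¹} (half_pos hαpos) m
    refine ⟨n, hmn, ?_⟩
    have hc := card_pos_real hne n
    have h1 := hsym g⁻¹ (Finset.mem_singleton_self g⁻¹)
    have h2 := ncard_inter_smul_ge (F := F) n g A
    have h3 : (((F n : Set G) ∩ (fun a => g * a) '' A).ncard : ℝ)
        ≤ (((F n : Set G) ∩ B).ncard : ℝ) := by
      have : ((F n : Set G) ∩ (fun a => g * a) '' A) ⊆ ((F n : Set G) ∩ B) :=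
        inter_subset_inter_right _ hAB
      exact_mod_cast Set.ncard_le_ncard this ((F n).finite_toSet.inter_of_left B)
    have h4 : α * (F n).card ≤ (((F n : Set G) ∩ A).ncard : ℝ) := (le_div_iff₀ hc).mp hr
    rw [le_div_iff₀ hc]
    linarith
  calc (0:ℝ) < α / 2 := half_pos hαpos
    _ ≤ upperDensity F B := le_upperDensity hne hmem

/-- Syndeticity of the "return-coincidence" set of a positive density set. -/
lemma syndetic_cover (hFol : IsFolnerNet F) {A : Set G}
    (h : 0 < upperDensity F A) :
    ∃ K : Finset G, ∀ g : G, ∃ k ∈ K, ∃ a1 ∈ A, ∃ a2 ∈ A, g * a1 = k * a2 := by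
  classical
  have hne := hFol.1
  obtain ⟨α, hαpos, hα⟩ := exists_pos_mem h
  obtain ⟨a₀, ha₀⟩ := nonempty_of_upperDensity_pos hne h
  -- the disjointness property
  set P : Finset G → Prop :=
    fun K => ∀ k1 ∈ K, ∀ k2 ∈ K, k1 ≠ k2 → ∀ a1 ∈ A, ∀ a2 ∈ A, k1 * a1 ≠ k2 * a2 with hP
  -- cardinality bound for P-sets
  have hbound : ∀ K : Finset G, P K → (K.card : ℝ) * (α / 2) ≤ 1 := by
    intro K hK
    obtain ⟨n, -, hr, hsym⟩ := exists_good_index hFol hne hα (K.image (fun k => k⁻¹))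
      (half_pos hαpos) (Classical.arbitrary D)
    have hc := card_pos_real hne n
    set Dk : G → Finset G := fun k => (F n).filter (fun x => x ∈ (fun a => k * a) '' A) with hDk
    have hcard : ∀ k ∈ K, (α / 2) * (F n).card ≤ ((Dk k).card : ℝ) := by
      intro k hk
      have h1 := hsym k⁻¹ (Finset.mem_image_of_mem _ hk)
      have h2 := ncard_inter_smul_ge (F := F) n k A
      have h4 : α * (F n).card ≤ (((F n : Set G) ∩ A).ncard : ℝ) := (le_div_iff₀ hc).mp hr
      have h5 : ((F n : Set G) ∩ (fun a => k * a) '' A).ncard = (Dk k).card := by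
        rw [hDk]
        rw [← Set.ncard_coe_finset]
        congr 1
        rw [Finset.coe_filter]
        ext a
        simp [Set.mem_inter_iff]
      rw [← h5]
      linarith
    have hdisj : ∀ k1 ∈ K, ∀ k2 ∈ K, k1 ≠ k2 → Disjoint (Dk k1) (Dk k2) := by
      intro k1 hk1 k2 hk2 hne12
      rw [Finset.disjoint_left]
      intro a ha1 ha2
      rw [hDk, Finset.mem_filter] at ha1 ha2
      obtain ⟨-, b1, hb1, hab1⟩ := ha1
      obtain ⟨-, b2, hb2, hab2⟩ := ha2
      exact hK k1 hk1 k2 hk2 hne12 b1 hb1 b2 hb2 (hab1.trans hab2.symm)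
    have hsum : (K.biUnion Dk).card = ∑ k ∈ K, (Dk k).card := Finset.card_biUnion hdisj
    have hsub : K.biUnion Dk ⊆ F n := by
      intro a ha
      rw [Finset.mem_biUnion] at ha
      obtain ⟨k, -, hk⟩ := ha
      exact Finset.mem_of_mem_filter a hk
    have hle : (∑ k ∈ K, ((Dk k).card : ℝ)) ≤ (F n).card := by
      have : (K.biUnion Dk).card ≤ (F n).card := Finset.card_le_card hsub
      have h6 : (∑ k ∈ K, ((Dk k).card : ℝ)) = ((K.biUnion Dk).card : ℝ) := by
        rw [hsum]; push_cast; ring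
      rw [h6]
      exact_mod_cast this
    have h7 : (K.card : ℝ) * ((α / 2) * (F n).card) ≤ ∑ k ∈ K, ((Dk k).card : ℝ) := by
      have := Finset.card_nsmul_le_sum K (fun k => ((Dk k).card : ℝ)) ((α / 2) * (F n).card)
        (fun k hk => hcard k hk)
      simpa [nsmul_eq_mul] using this
    have h8 : (K.card : ℝ) * (α / 2) * (F n).card ≤ 1 * (F n).card := by
      calc (K.card : ℝ) * (α / 2) * (F n).card = (K.card : ℝ) * ((α / 2) * (F n).card) := by ring
        _ ≤ ∑ k ∈ K, ((Dk k).card : ℝ) := h7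
        _ ≤ (F n).card := hle
        _ = 1 * (F n).card := by ring
    exact le_of_mul_le_mul_right (by linarith [h8]) hc
  -- if no finite K covers, build arbitrarily large P-sets
  by_contra hcon
  push_neg at hcon
  have hstep : ∀ K : Finset G, ∃ g : G, g ∉ K ∧ (P K → P (insert g K)) := by
    intro K
    obtain ⟨g, hg⟩ := hcon K
    have hgK : g ∉ K := by
      intro hgK
      exact hg g hgK a₀ ha₀ a₀ ha₀ rfl
    refine ⟨g, hgK, ?_⟩
    intro hK k1 hk1 k2 hk2 hne12 a1 ha1 a2 ha2
    rcases Finset.mem_insert.mp hk1 with rfl | hk1'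
    · rcases Finset.mem_insert.mp hk2 with rfl | hk2'
      · exact absurd rfl hne12
      · exact hg k2 hk2' a1 ha1 a2 ha2
    · rcases Finset.mem_insert.mp hk2 with rfl | hk2'
      · exact fun hEq => hg k1 hk1' a2 ha2 a1 ha1 hEq.symm
      · exact hK k1 hk1' k2 hk2' hne12 a1 ha1 a2 ha2
  choose gf hgf1 hgf2 using hstep
  set f : ℕ → Finset G := fun i => Nat.rec ∅ (fun _ K => insert (gf K) K) i with hf
  have hfP : ∀ i : ℕ, P (f i) ∧ (f i).card = i := by
    intro i
    induction i with
    | zero =>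
      constructor
      · intro k1 hk1
        simp [hf] at hk1
      · simp [hf]
    | succ i ih =>
      have hfi : f (i + 1) = insert (gf (f i)) (f i) := rfl
      constructor
      · rw [hfi]; exact hgf2 (f i) ih.1
      · rw [hfi, Finset.card_insert_of_notMem (hgf1 (f i)), ih.2]
  obtain ⟨N, hN⟩ := exists_nat_gt (2 / α)
  have hb := hbound (f N) (hfP N).1
  rw [(hfP N).2] at hb
  have : (2 / α) * (α / 2) = 1 := by field_simp
  nlinarith [hαpos, hN, hb]
end AYaux

/-- Theorem 3.7: if `C_F(x)` is S-generic and not minimal, then the subsystem on `C_F(x)` is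
point transitive and sensitive: for some `ε > 0`, for every `z ∈ C_F(x)` the set
`U_ε(z)` is dense in `C_F(x)`. -/
theorem auslanderYorke_of_Sgeneric_nonminimal
    {G : Type*} [Group G] [Infinite G] [DecidableEq G]
    {D : Type*} [Preorder D] [IsDirected D (· ≤ ·)] [Nonempty D]
    {X : Type*} [MetricSpace X] [CompactSpace X] [MulAction G X]
    (hcont : ∀ g : G, Continuous fun y : X => g • y)
    (Fol : D → Finset G) (hFol : IsFolnerNet Fol) (x : X)
    (hS : ∃ z ∈ minCenter Fol x, minCenter Fol z = minCenter Fol x)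
    (hnotmin : ¬ IsMinimalSubset G (minCenter Fol x)) :
    (∃ y ∈ minCenter Fol x, minCenter Fol x ⊆ closure (MulAction.orbit G y)) ∧
    ∃ ε : ℝ, 0 < ε ∧ ∀ z ∈ minCenter Fol x,
      minCenter Fol x ⊆
        closure {y : X | y ∈ minCenter Fol x ∧
          ∃ g : ℕ → G, ε ≤ Filter.liminf (fun n => dist ((g n) • z) ((g n) • y)) atTop} := by
  classical
  obtain ⟨z, hzC, hzc⟩ := hS
  have hne := hFol.1
  have hz_dense : ∀ y ∈ minCenter Fol x, ∀ U : Set X, IsOpen U → y ∈ U →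
      0 < upperDensity Fol {g : G | g • z ∈ U} := by
    intro y hy U hU hyU
    have hy' : y ∈ minCenter Fol z := by rw [hzc]; exact hy
    exact hy' U hU hyU
  have hC_closed : IsClosed (minCenter Fol x) := by
    rw [← isOpen_compl_iff, isOpen_iff_mem_nhds]
    intro y hy
    simp only [minCenter, mem_compl_iff, mem_setOf_eq, not_forall] at hy
    obtain ⟨U, hU, hyU, hpos⟩ := hy
    refine Filter.mem_of_superset (hU.mem_nhds hyU) ?_
    intro y' hy' hy'C
    exact hpos (hy'C U hU hy')
  have hC_inv : ∀ g : G, ∀ y ∈ minCenter Fol x, g • y ∈ minCenter Fol x := by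
    intro g y hy U hU hgU
    have hV : IsOpen ((fun w : X => g • w) ⁻¹' U) := hU.preimage (hcont g)
    have hpos := hy _ hV hgU
    refine AYaux.upperDensity_pos_of_smul hFol g ?_ hpos
    rintro _ ⟨a, ha, rfl⟩
    simp only [mem_setOf_eq] at ha ⊢
    rw [mul_smul]
    exact ha
  have horb : ∀ y ∈ minCenter Fol x, y ∈ closure (MulAction.orbit G z) := by
    intro y hy
    rw [_root_.mem_closure_iff]
    intro o ho hyo
    obtain ⟨g, hg⟩ := AYaux.nonempty_of_upperDensity_pos hne (hz_dense y hy o ho hyo)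
    exact ⟨g • z, hg, MulAction.mem_orbit z g⟩
  refine ⟨⟨z, hzC, fun y hy => horb y hy⟩, ?_⟩
  have hCne : (minCenter Fol x).Nonempty := ⟨z, hzC⟩
  have hM : ∃ M, M ⊆ minCenter Fol x ∧ M.Nonempty ∧ IsClosed M ∧
      (∀ g : G, ∀ w ∈ M, g • w ∈ M) ∧ M ≠ minCenter Fol x := by
    by_contra hcon
    push_neg at hcon
    exact hnotmin ⟨hCne, hC_closed, hC_inv, fun Λ' h1 h2 h3 h4 => hcon Λ' h1 h2 h3 h4⟩
  obtain ⟨M, hMC, hMne, hMcl, hMinv, hMneq⟩ := hM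
  obtain ⟨c, hcC, hcM⟩ := Set.exists_of_ssubset (ssubset_of_subset_of_ne hMC hMneq)
  have hd : 0 < infDist c M := (hMcl.notMem_iff_infDist_pos hMne).mp hcM
  set ε := infDist c M / 8 with hεdef
  have hεpos : 0 < ε := by positivity
  refine ⟨ε, hεpos, ?_⟩
  intro z' hz' w hw
  by_contra hwcl
  rw [_root_.mem_closure_iff] at hwcl
  push_neg at hwcl
  obtain ⟨V, hV, hwV, hVS⟩ := hwcl
  -- T0: tracking
  have T0 : ∀ y, y ∈ V → y ∈ minCenter Fol x → ∀ g : G, dist (g • z') (g • y) < ε := by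
    intro y hyV hyC g
    by_contra hge
    push_neg at hge
    have hymem : y ∈ {y : X | y ∈ minCenter Fol x ∧
        ∃ gs : ℕ → G, ε ≤ Filter.liminf (fun n => dist ((gs n) • z') ((gs n) • y)) atTop} := by
      refine ⟨hyC, fun _ => g, ?_⟩
      rw [Filter.liminf_const]
      exact hge
    have : y ∈ V ∩ {y : X | y ∈ minCenter Fol x ∧
        ∃ gs : ℕ → G, ε ≤ Filter.liminf (fun n => dist ((gs n) • z') ((gs n) • y)) atTop} :=
      ⟨hyV, hymem⟩
    rw [hVS] at this
    exact this
  have T1 : ∀ y1, y1 ∈ V → y1 ∈ minCenter Fol x → ∀ y2, y2 ∈ V → y2 ∈ minCenter Fol x →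
      ∀ g : G, dist (g • y1) (g • y2) < 2 * ε := by
    intro y1 h1V h1C y2 h2V h2C g
    calc dist (g • y1) (g • y2) ≤ dist (g • y1) (g • z') + dist (g • z') (g • y2) :=
          dist_triangle _ _ _
      _ < ε + ε := by
          have := T0 y1 h1V h1C g
          have := T0 y2 h2V h2C g
          rw [dist_comm (g • y1) (g • z')]
          linarith
      _ = 2 * ε := by ring
  set A := {g : G | g • z ∈ V} with hAdef
  have hA : 0 < upperDensity Fol A := hz_dense w hw V hV hwV
  obtain ⟨K, hK⟩ := AYaux.syndetic_cover hFol hA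
  obtain ⟨a0, ha0⟩ := AYaux.nonempty_of_upperDensity_pos hne hA
  set y0 := a0 • z with hy0def
  have hy0V : y0 ∈ V := ha0
  have hy0C : y0 ∈ minCenter Fol x := hC_inv a0 z hzC
  obtain ⟨m0, hm0⟩ := hMne
  have hm0C : m0 ∈ minCenter Fol x := hMC hm0
  have hm0cl : m0 ∈ closure (MulAction.orbit G y0) := by
    rw [hy0def, MulAction.orbit_smul]
    exact horb m0 hm0C
  rw [mem_closure_iff_seq_limit] at hm0cl
  obtain ⟨sq, hsqmem, hsqlim⟩ := hm0cl
  choose gq hgq using fun i => MulAction.mem_orbit_iff.mp (hsqmem i)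
  choose kq hkqK a1q ha1q a2q ha2q hrel using fun i => hK (gq i)
  have hfib : ∃ k0, k0 ∈ K ∧ {i : ℕ | kq i = k0}.Infinite := by
    by_contra hcon2
    push_neg at hcon2
    have hfin : (⋃ k ∈ (K : Set G), {i : ℕ | kq i = k}).Finite :=
      Set.Finite.biUnion K.finite_toSet
        (fun k hk => hcon2 k hk)
    have : (Set.univ : Set ℕ).Finite := by
      refine hfin.subset ?_
      intro i _
      exact Set.mem_biUnion (hkqK i) rfl
    exact Set.infinite_univ this
  obtain ⟨k0, hk0K, hinf⟩ := hfib
  set ψ : ℕ → ℕ := Nat.nth (fun i => kq i = k0) with hψdef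
  have hψmem : ∀ j, kq (ψ j) = k0 := fun j => Nat.nth_mem_of_infinite hinf j
  have hψmono : StrictMono ψ := Nat.nth_strictMono hinf
  set w1 : ℕ → X := fun j => a2q (ψ j) • z with hw1def
  have hw1C : ∀ j, w1 j ∈ minCenter Fol x := fun j => hC_inv _ _ hzC
  have hw1V : ∀ j, w1 j ∈ V := fun j => ha2q (ψ j)
  have hCcomp : IsCompact (minCenter Fol x) := hC_closed.isCompact
  obtain ⟨ustar, hustarC, φ2, hφ2, hulim⟩ := hCcomp.tendsto_subseq hw1C
  set idx : ℕ → ℕ := fun j => ψ (φ2 j) with hidxdef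
  have hseq1 : Tendsto (fun j => sq (idx j)) atTop (nhds m0) :=
    hsqlim.comp (hψmono.comp hφ2).tendsto_atTop
  have hvlim : Tendsto (fun j => k0⁻¹ • sq (idx j)) atTop (nhds (k0⁻¹ • m0)) :=
    ((hcont k0⁻¹).tendsto m0).comp hseq1
  -- T2
  have T2 : ∀ j, ∀ h : G, dist (h • (k0⁻¹ • sq (idx j))) (h • w1 (φ2 j)) < 2 * ε := by
    intro j h
    have hk : kq (idx j) = k0 := hψmem (φ2 j)
    have hT1 := T1 y0 hy0V hy0C (a1q (idx j) • z) (ha1q (idx j)) (hC_inv _ _ hzC)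
      (h * (k0⁻¹ * gq (idx j)))
    have e1 : (h * (k0⁻¹ * gq (idx j))) • y0 = h • (k0⁻¹ • sq (idx j)) := by
      rw [mul_smul, mul_smul, hgq (idx j)]
    have e2 : (h * (k0⁻¹ * gq (idx j))) • (a1q (idx j) • z) = h • w1 (φ2 j) := by
      show _ = h • (a2q (idx j) • z)
      rw [smul_smul, smul_smul]
      congr 1
      have hr := hrel (idx j)
      rw [hk] at hr
      calc h * (k0⁻¹ * gq (idx j)) * a1q (idx j)
          = h * (k0⁻¹ * (gq (idx j) * a1q (idx j))) := by group
        _ = h * (k0⁻¹ * (k0 * a2q (idx j))) := by rw [hr]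
        _ = h * a2q (idx j) := by group
    rw [e1, e2] at hT1
    exact hT1
  have Gh1 : ∀ h : G, dist (h • (k0⁻¹ • m0)) (h • ustar) ≤ 2 * ε := by
    intro h
    have l1 : Tendsto (fun j => h • (k0⁻¹ • sq (idx j))) atTop (nhds (h • (k0⁻¹ • m0))) :=
      ((hcont h).tendsto _).comp hvlim
    have l2 : Tendsto (fun j => h • w1 (φ2 j)) atTop (nhds (h • ustar)) :=
      ((hcont h).tendsto _).comp hulim
    exact le_of_tendsto (l1.dist l2) (Filter.Eventually.of_forall fun j => (T2 j h).le)
  have Gh2 : ∀ h : G, dist (h • y0) (h • ustar) ≤ 2 * ε := by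
    intro h
    have l2 : Tendsto (fun j => h • w1 (φ2 j)) atTop (nhds (h • ustar)) :=
      ((hcont h).tendsto _).comp hulim
    refine le_of_tendsto (Filter.Tendsto.dist tendsto_const_nhds l2)
      (Filter.Eventually.of_forall fun j => ?_)
    exact (T1 y0 hy0V hy0C (w1 (φ2 j)) (hw1V (φ2 j)) (hw1C (φ2 j)) h).le
  have Gh3 : ∀ h : G, infDist (h • y0) M ≤ 4 * ε := by
    intro h
    have hvM : h • (k0⁻¹ • m0) ∈ M := by
      rw [smul_smul]
      exact hMinv _ _ hm0
    calc infDist (h • y0) M ≤ dist (h • y0) (h • (k0⁻¹ • m0)) := infDist_le_dist_of_mem hvM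
      _ ≤ dist (h • y0) (h • ustar) + dist (h • ustar) (h • (k0⁻¹ • m0)) := dist_triangle _ _ _
      _ ≤ 2 * ε + 2 * ε := by
          have := Gh2 h
          have h1 := Gh1 h
          rw [dist_comm (h • ustar) (h • (k0⁻¹ • m0))]
          linarith
      _ = 4 * ε := by ring
  have hccl : c ∈ closure (MulAction.orbit G y0) := by
    rw [hy0def, MulAction.orbit_smul]
    exact horb c hcC
  rw [mem_closure_iff_seq_limit] at hccl
  obtain ⟨sq2, hsq2mem, hsq2lim⟩ := hccl
  choose hq hhq using fun j => MulAction.mem_orbit_iff.mp (hsq2mem j)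
  have hlim2 : Tendsto (fun j => infDist (sq2 j) M) atTop (nhds (infDist c M)) :=
    ((continuous_infDist_pt M).tendsto c).comp hsq2lim
  have hfin : infDist c M ≤ 4 * ε :=
    le_of_tendsto hlim2 (Filter.Eventually.of_forall fun j => by
      rw [← hhq j]; exact Gh3 (hq j))
  rw [hεdef] at hfin
  linarith
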